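/- (Theorem 1, geometric decay) Under the hypotheses of Theorem 1 (n ≥ n', A symmetric n×n, A' symmetric n'×n', K an n×n' matrix, λ ≥ 0, α ∈ [0,1], ‖A‖₂·‖A'‖₂ < ε, and the iteration X⁽ᵗ⁺¹⁾ = (1−α)X⁽ᵗ⁾ + α·P_d(A X⁽ᵗ⁾ A' + λK)), for all t ≥ 0 one has ‖X⁽ᵗ⁺¹⁾ − X⁽ᵗ⁾‖_F ≤ (1−α+αε)ᵗ · ‖X⁽¹⁾ − X⁽⁰⁾‖_F. -/

import Mathlib

open Matrix


/-- The Frobenius norm of a real matrix. -/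
noncomputable def frobNorm {m p : Type*} [Fintype m] [Fintype p] (A : Matrix m p ℝ) : ℝ :=
  Real.sqrt (∑ i, ∑ j, (A i j) ^ 2)

/-- The spectral (ℓ₂ operator) norm of a real square matrix. -/
noncomputable def specNorm {m : Type*} [Fintype m] [DecidableEq m] (A : Matrix m m ℝ) : ℝ :=
  ‖Matrix.toEuclideanCLM (𝕜 := ℝ) A‖

/-- `Omega n n'` is the set of partial doubly stochastic matrices: real `n × n'` matrices
with row sums at most 1, column sums equal to 1, and nonnegative entries. -/
def Omega (n n' : ℕ) : Set (Matrix (Fin n) (Fin n') ℝ) :=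
  {X | (∀ i, ∑ j, X i j ≤ 1) ∧ (∀ j, ∑ i, X i j = 1) ∧ (∀ i j, 0 ≤ X i j)}

noncomputable def matE (n n' : ℕ) : Matrix (Fin n) (Fin n') ℝ →ₗ[ℝ] EuclideanSpace ℝ (Fin n × Fin n') where
  toFun X := (WithLp.equiv 2 _).symm (fun p : Fin n × Fin n' => X p.1 p.2)
  map_add' X Y := rfl
  map_smul' c X := rfl

lemma frobNorm_eq {n n' : ℕ} (X : Matrix (Fin n) (Fin n') ℝ) :
    frobNorm X = ‖matE n n' X‖ := by
  rw [EuclideanSpace.norm_eq, frobNorm]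
  congr 1
  rw [Fintype.sum_prod_type]
  simp [matE, sq_abs]

lemma omega_convex (n n' : ℕ) : Convex ℝ (Omega n n') := by
  intro X hX Y hY a b ha hb hab
  refine ⟨fun i => ?_, fun j => ?_, fun i j => ?_⟩
  · simp only [Matrix.add_apply, Matrix.smul_apply, smul_eq_mul, Finset.sum_add_distrib,
      ← Finset.mul_sum]
    calc a * ∑ j, X i j + b * ∑ j, Y i j ≤ a * 1 + b * 1 := by
          gcongr
          exacts [hX.1 i, hY.1 i]
      _ = 1 := by linarith
  · simp only [Matrix.add_apply, Matrix.smul_apply, smul_eq_mul, Finset.sum_add_distrib,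
      ← Finset.mul_sum, hX.2.1 j, hY.2.1 j]
    linarith
  · have := hX.2.2 i j; have := hY.2.2 i j
    simp only [Matrix.add_apply, Matrix.smul_apply, smul_eq_mul]
    positivity

/-- variational inequality for the projection -/
lemma proj_var_ineq {n n' : ℕ} (Pd : Matrix (Fin n) (Fin n') ℝ → Matrix (Fin n) (Fin n') ℝ)
    (hPd_mem : ∀ Y, Pd Y ∈ Omega n n')
    (hPd_min : ∀ Y, ∀ D ∈ Omega n n', frobNorm (Y - Pd Y) ≤ frobNorm (Y - D))
    (Y : Matrix (Fin n) (Fin n') ℝ) (D : Matrix (Fin n) (Fin n') ℝ) (hD : D ∈ Omega n n') :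
    inner ℝ (matE n n' Y - matE n n' (Pd Y)) (matE n n' D - matE n n' (Pd Y)) ≤ (0 : ℝ) := by
  set K : Set (EuclideanSpace ℝ (Fin n × Fin n')) := (matE n n') '' (Omega n n') with hK
  have hconv : Convex ℝ K := (omega_convex n n').linear_image (matE n n')
  have hmem : matE n n' (Pd Y) ∈ K := ⟨Pd Y, hPd_mem Y, rfl⟩
  haveI : Nonempty K := ⟨⟨_, hmem⟩⟩
  have key : ‖matE n n' Y - matE n n' (Pd Y)‖ = ⨅ w : K, ‖matE n n' Y - w‖ := by
    apply le_antisymm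
    · apply le_ciInf
      rintro ⟨w, W, hW, rfl⟩
      have := hPd_min Y W hW
      rwa [frobNorm_eq, frobNorm_eq, map_sub, map_sub] at this
    · haveI : Nonempty K := ⟨⟨_, hmem⟩⟩
      exact ciInf_le ⟨0, fun x ⟨w, hw⟩ => hw ▸ norm_nonneg _⟩ (⟨_, hmem⟩ : K)
  have := (norm_eq_iInf_iff_real_inner_le_zero hconv hmem).mp key
  exact this _ ⟨D, hD, rfl⟩

lemma proj_nonexpansive {n n' : ℕ} (Pd : Matrix (Fin n) (Fin n') ℝ → Matrix (Fin n) (Fin n') ℝ)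
    (hPd_mem : ∀ Y, Pd Y ∈ Omega n n')
    (hPd_min : ∀ Y, ∀ D ∈ Omega n n', frobNorm (Y - Pd Y) ≤ frobNorm (Y - D))
    (Y Z : Matrix (Fin n) (Fin n') ℝ) :
    frobNorm (Pd Y - Pd Z) ≤ frobNorm (Y - Z) := by
  rw [frobNorm_eq, frobNorm_eq, map_sub, map_sub]
  set p := matE n n' (Pd Y)
  set q := matE n n' (Pd Z)
  set u := matE n n' Y
  set v := matE n n' Z
  have h1 : inner ℝ (u - p) (q - p) ≤ (0:ℝ) := proj_var_ineq Pd hPd_mem hPd_min Y _ (hPd_mem Z)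
  have h2 : inner ℝ (v - q) (p - q) ≤ (0:ℝ) := proj_var_ineq Pd hPd_mem hPd_min Z _ (hPd_mem Y)
  have hsq : ‖p - q‖ ^ 2 ≤ inner ℝ (u - v) (p - q) := by
    have e1 : (inner ℝ (u - p) (q - p) : ℝ) = -(inner ℝ (u - p) (p - q) : ℝ) := by
      rw [← inner_neg_right]; congr 1; abel
    have hpq : (inner ℝ (p - q) (p - q) : ℝ) = ‖p - q‖ ^ 2 := real_inner_self_eq_norm_sq _
    have expand : (inner ℝ (u - v) (p - q) : ℝ) =
        inner ℝ (u - p) (p - q) + inner ℝ (p - q) (p - q) + inner ℝ (q - v) (p - q) := by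
      rw [← inner_add_left, ← inner_add_left]; congr 1; abel
    have h2' : (0:ℝ) ≤ inner ℝ (q - v) (p - q) := by
      have : (inner ℝ (q - v) (p - q) : ℝ) = -inner ℝ (v - q) (p - q) := by
        rw [← inner_neg_left]; congr 1; abel
      linarith [this ▸ neg_nonneg.mpr h2]
    nlinarith [e1 ▸ h1]
  have cs : (inner ℝ (u - v) (p - q) : ℝ) ≤ ‖u - v‖ * ‖p - q‖ := real_inner_le_norm _ _
  rcases eq_or_lt_of_le (norm_nonneg (p - q)) with h0 | h0
  · rw [← h0]; exact norm_nonneg _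
  · nlinarith

lemma specNorm_nonneg {n : ℕ} (A : Matrix (Fin n) (Fin n) ℝ) : 0 ≤ specNorm A :=
  norm_nonneg _

lemma mulVec_sq_sum {n : ℕ} (A : Matrix (Fin n) (Fin n) ℝ) (v : Fin n → ℝ) :
    ∑ i, (A.mulVec v i) ^ 2 ≤ specNorm A ^ 2 * ∑ i, (v i) ^ 2 := by
  have h1 : ‖(Matrix.toEuclideanCLM (𝕜 := ℝ) A) ((WithLp.equiv 2 _).symm v)‖ ≤
      specNorm A * ‖(WithLp.equiv 2 (Fin n → ℝ)).symm v‖ :=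
    (Matrix.toEuclideanCLM (𝕜 := ℝ) A).le_opNorm _
  rw [show (Matrix.toEuclideanCLM (𝕜 := ℝ) A) ((WithLp.equiv 2 _).symm v) =
      (WithLp.equiv 2 (Fin n → ℝ)).symm (Matrix.toLin' A v) from rfl] at h1
  simp only [Matrix.toLin'_apply] at h1
  have e1 : ‖(WithLp.equiv 2 (Fin n → ℝ)).symm (A.mulVec v)‖ =
      Real.sqrt (∑ i, (A.mulVec v i) ^ 2) := by
    rw [EuclideanSpace.norm_eq]; congr 1; simp [sq_abs]
  have e2 : ‖(WithLp.equiv 2 (Fin n → ℝ)).symm v‖ = Real.sqrt (∑ i, (v i) ^ 2) := by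
    rw [EuclideanSpace.norm_eq]; congr 1; simp [sq_abs]
  rw [e1, e2] at h1
  have hs1 : (0:ℝ) ≤ ∑ i, (A.mulVec v i) ^ 2 := Finset.sum_nonneg fun i _ => sq_nonneg _
  have hs2 : (0:ℝ) ≤ ∑ i, (v i) ^ 2 := Finset.sum_nonneg fun i _ => sq_nonneg _
  nlinarith [Real.sq_sqrt hs1, Real.sq_sqrt hs2, Real.sqrt_nonneg (∑ i, (A.mulVec v i) ^ 2),
    Real.sqrt_nonneg (∑ i, (v i) ^ 2), norm_nonneg (Matrix.toEuclideanCLM (𝕜 := ℝ) A)]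

lemma frob_mul_left {n n' : ℕ} (A : Matrix (Fin n) (Fin n) ℝ) (M : Matrix (Fin n) (Fin n') ℝ) :
    frobNorm (A * M) ≤ specNorm A * frobNorm M := by
  have key : ∑ i, ∑ j, ((A * M) i j) ^ 2 ≤ specNorm A ^ 2 * ∑ i, ∑ j, (M i j) ^ 2 := by
    rw [Finset.sum_comm, Finset.sum_comm (s := Finset.univ) (t := Finset.univ)
      (f := fun i j => (M i j) ^ 2), Finset.mul_sum]
    apply Finset.sum_le_sum
    intro j _
    have := mulVec_sq_sum A (fun k => M k j)
    have eq : ∀ i, (A * M) i j = A.mulVec (fun k => M k j) i := by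
      intro i; simp [Matrix.mul_apply, Matrix.mulVec, dotProduct]
    simpa [eq] using this
  unfold frobNorm
  calc Real.sqrt (∑ i, ∑ j, ((A * M) i j) ^ 2)
      ≤ Real.sqrt (specNorm A ^ 2 * ∑ i, ∑ j, (M i j) ^ 2) := Real.sqrt_le_sqrt key
    _ = specNorm A * Real.sqrt (∑ i, ∑ j, (M i j) ^ 2) := by
        rw [Real.sqrt_mul (sq_nonneg _), Real.sqrt_sq (specNorm_nonneg _)]

lemma frob_transpose {n n' : ℕ} (M : Matrix (Fin n) (Fin n') ℝ) :
    frobNorm Mᵀ = frobNorm M := by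
  unfold frobNorm
  rw [Finset.sum_comm]
  simp [Matrix.transpose_apply]

lemma frob_mul_right {n n' : ℕ} (A' : Matrix (Fin n') (Fin n') ℝ) (hA' : A'.IsSymm)
    (M : Matrix (Fin n) (Fin n') ℝ) :
    frobNorm (M * A') ≤ specNorm A' * frobNorm M := by
  rw [← frob_transpose (M * A'), Matrix.transpose_mul, hA'.eq, ← frob_transpose M]
  exact frob_mul_left A' Mᵀ

lemma frob_nonneg {n n' : ℕ} (M : Matrix (Fin n) (Fin n') ℝ) : 0 ≤ frobNorm M :=
  Real.sqrt_nonneg _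

lemma frob_combo {n n' : ℕ} (a b : ℝ) (ha : 0 ≤ a) (hb : 0 ≤ b)
    (U V : Matrix (Fin n) (Fin n') ℝ) :
    frobNorm (a • U + b • V) ≤ a * frobNorm U + b * frobNorm V := by
  rw [frobNorm_eq, frobNorm_eq, frobNorm_eq, map_add, _root_.map_smul, _root_.map_smul]
  calc ‖a • matE n n' U + b • matE n n' V‖ ≤ ‖a • matE n n' U‖ + ‖b • matE n n' V‖ :=
        norm_add_le _ _
    _ = a * ‖matE n n' U‖ + b * ‖matE n n' V‖ := by
        rw [norm_smul, norm_smul, Real.norm_eq_abs, Real.norm_eq_abs,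
          abs_of_nonneg ha, abs_of_nonneg hb]


/-- (Theorem 1, geometric decay) Under the hypotheses of Theorem 1, the FastPFP iterates
satisfy `‖X⁽ᵗ⁺¹⁾ − X⁽ᵗ⁾‖_F ≤ (1−α+αε)ᵗ · ‖X⁽¹⁾ − X⁽⁰⁾‖_F` for all `t ≥ 0`. -/
theorem fastPFP_geometric_decay (n n' : ℕ) (hn' : 0 < n') (hnn : n' ≤ n)
    (A : Matrix (Fin n) (Fin n) ℝ) (hA : A.IsSymm)
    (A' : Matrix (Fin n') (Fin n') ℝ) (hA' : A'.IsSymm)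
    (K : Matrix (Fin n) (Fin n') ℝ) (lam : ℝ) (hlam : 0 ≤ lam)
    (α : ℝ) (hα : α ∈ Set.Icc (0 : ℝ) 1) (ε : ℝ) (hε : 0 < ε)
    (hspec : specNorm A * specNorm A' < ε)
    (Pd : Matrix (Fin n) (Fin n') ℝ → Matrix (Fin n) (Fin n') ℝ)
    (hPd_mem : ∀ Y, Pd Y ∈ Omega n n')
    (hPd_min : ∀ Y, ∀ D ∈ Omega n n', frobNorm (Y - Pd Y) ≤ frobNorm (Y - D))
    (X : ℕ → Matrix (Fin n) (Fin n') ℝ)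
    (hX : ∀ t, X (t + 1) = (1 - α) • X t + α • Pd (A * X t * A' + lam • K))
    (t : ℕ) :
    frobNorm (X (t + 1) - X t) ≤ (1 - α + α * ε) ^ t * frobNorm (X 1 - X 0) := by
  obtain ⟨hα0, hα1⟩ := hα
  set r := 1 - α + α * ε with hr
  have hr0 : 0 ≤ r := by nlinarith
  have step : ∀ s, frobNorm (X (s + 2) - X (s + 1)) ≤ r * frobNorm (X (s + 1) - X s) := by
    intro s
    set Y0 := A * X s * A' + lam • K with hY0
    set Y1 := A * X (s + 1) * A' + lam • K with hY1
    have hdiff : X (s + 2) - X (s + 1)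
        = (1 - α) • (X (s + 1) - X s) + α • (Pd Y1 - Pd Y0) := by
      simp only [hY0, hY1]
      rw [show s + 2 = s + 1 + 1 from rfl, hX (s + 1), hX s]
      module
    have hYdiff : Y1 - Y0 = A * (X (s + 1) - X s) * A' := by
      rw [hY0, hY1, add_sub_add_right_eq_sub, Matrix.mul_sub, Matrix.sub_mul]
    have hproj : frobNorm (Pd Y1 - Pd Y0) ≤ frobNorm (Y1 - Y0) :=
      proj_nonexpansive Pd hPd_mem hPd_min Y1 Y0
    have hbound : frobNorm (Y1 - Y0) ≤ specNorm A * specNorm A' * frobNorm (X (s + 1) - X s) := by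
      rw [hYdiff]
      calc frobNorm (A * (X (s + 1) - X s) * A')
          ≤ specNorm A' * frobNorm (A * (X (s + 1) - X s)) := frob_mul_right A' hA' _
        _ ≤ specNorm A' * (specNorm A * frobNorm (X (s + 1) - X s)) := by
            have := frob_mul_left A (X (s + 1) - X s)
            have hA'0 : 0 ≤ specNorm A' := specNorm_nonneg _
            nlinarith
        _ = specNorm A * specNorm A' * frobNorm (X (s + 1) - X s) := by ring
    have hfrob0 : 0 ≤ frobNorm (X (s + 1) - X s) := frob_nonneg _
    calc frobNorm (X (s + 2) - X (s + 1))
        = frobNorm ((1 - α) • (X (s + 1) - X s) + α • (Pd Y1 - Pd Y0)) := by rw [hdiff]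
      _ ≤ (1 - α) * frobNorm (X (s + 1) - X s) + α * frobNorm (Pd Y1 - Pd Y0) :=
          frob_combo _ _ (by linarith) hα0 _ _
      _ ≤ (1 - α) * frobNorm (X (s + 1) - X s)
            + α * (specNorm A * specNorm A' * frobNorm (X (s + 1) - X s)) := by
          have := hproj.trans hbound
          nlinarith
      _ ≤ r * frobNorm (X (s + 1) - X s) := by
          rw [hr]
          nlinarith [mul_le_mul_of_nonneg_left hspec.le hα0]
  induction t with
  | zero => simp
  | succ s ih =>
    calc frobNorm (X (s + 1 + 1) - X (s + 1)) ≤ r * frobNorm (X (s + 1) - X s) := step s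
      _ ≤ r * (r ^ s * frobNorm (X 1 - X 0)) := mul_le_mul_of_nonneg_left ih hr0
      _ = r ^ (s + 1) * frobNorm (X 1 - X 0) := by ring
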